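/- Let Q be a real v×s matrix with Qᵀ 1_v = 0_s (a cyclic system of contrasts), and suppose there exists a cyclic permutation π of {1,…,v} (a permutation consisting of a single cycle of length v) whose permutation matrix P satisfies P Q Qᵀ Pᵀ = Q Qᵀ. Let Φ be a design criterion for Q. Then the uniform design w̄ = (1/v,…,1/v) satisfies Φ(w̄) ≥ Φ(w) for every design w on v treatments. -/

import Mathlib

open Matrix

/-- A design on a finite set of treatments: strictly positive weights summing to one. -/
def IsDesign {ι : Type*} [Fintype ι] (w : ι → ℝ) : Prop :=
  (∀ i, 0 < w i) ∧ ∑ i, w i = 1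

open Polynomial in
lemma aux_eval_charpoly {n : ℕ} (M : Matrix (Fin n) (Fin n) ℝ) (x : ℝ) :
    M.charpoly.eval x = det (x • (1 : Matrix (Fin n) (Fin n) ℝ) - M) := by
  rw [Matrix.charpoly, ← Polynomial.coe_evalRingHom, RingHom.map_det]
  congr 1
  ext i j
  by_cases h : i = j
  · subst h; simp [Matrix.one_apply]
  · simp [Matrix.charmatrix_apply_ne _ _ _ h, Matrix.one_apply, h]

lemma aux_det_swap {v s : ℕ} (M : Matrix (Fin v) (Fin s) ℝ) {x : ℝ} (hx : x ≠ 0) :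
    x ^ s * det (x • (1 : Matrix (Fin v) (Fin v) ℝ) - M * Mᵀ)
      = x ^ v * det (x • (1 : Matrix (Fin s) (Fin s) ℝ) - Mᵀ * M) := by
  haveI : Invertible (x • (1 : Matrix (Fin v) (Fin v) ℝ)) :=
    ⟨x⁻¹ • (1 : Matrix (Fin v) (Fin v) ℝ),
      by rw [smul_mul_smul_comm, inv_mul_cancel₀ hx, one_mul, one_smul],
      by rw [smul_mul_smul_comm, mul_inv_cancel₀ hx, one_mul, one_smul]⟩
  have hinv : ⅟(x • (1 : Matrix (Fin v) (Fin v) ℝ)) = x⁻¹ • (1 : Matrix (Fin v) (Fin v) ℝ) :=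
    invOf_eq_right_inv (by rw [smul_mul_smul_comm, mul_inv_cancel₀ hx, one_mul, one_smul])
  have h1 := Matrix.det_fromBlocks_one₂₂ (x • (1 : Matrix (Fin v) (Fin v) ℝ)) M Mᵀ
  have h2 := Matrix.det_fromBlocks₁₁ (x • (1 : Matrix (Fin v) (Fin v) ℝ)) M Mᵀ
    (1 : Matrix (Fin s) (Fin s) ℝ)
  rw [hinv] at h2
  have key : det (x • (1 : Matrix (Fin v) (Fin v) ℝ) - M * Mᵀ)
      = x ^ v * det ((1 : Matrix (Fin s) (Fin s) ℝ) - x⁻¹ • (Mᵀ * M)) := by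
    rw [← h1, h2, det_smul, det_one, mul_one, Fintype.card_fin]
    congr 2
    rw [Matrix.mul_smul, Matrix.mul_one, Matrix.smul_mul]
  have key2 : det (x • (1 : Matrix (Fin s) (Fin s) ℝ) - Mᵀ * M)
      = x ^ s * det ((1 : Matrix (Fin s) (Fin s) ℝ) - x⁻¹ • (Mᵀ * M)) := by
    have hh : x • ((1 : Matrix (Fin s) (Fin s) ℝ) - x⁻¹ • (Mᵀ * M))
        = x • (1 : Matrix (Fin s) (Fin s) ℝ) - Mᵀ * M := by
      rw [smul_sub, smul_smul, mul_inv_cancel₀ hx, one_smul]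
    rw [← hh, det_smul, Fintype.card_fin]
  rw [key, key2]; ring

lemma aux_charpoly_swap {v s : ℕ} (M N : Matrix (Fin v) (Fin s) ℝ)
    (h : M * Mᵀ = N * Nᵀ) : (Mᵀ * M).charpoly = (Nᵀ * N).charpoly := by
  apply Polynomial.eq_of_infinite_eval_eq
  apply Set.Infinite.mono (s := {x : ℝ | x ≠ 0})
  · intro x hx
    have h1 := aux_det_swap M hx
    have h2 := aux_det_swap N hx
    rw [h] at h1
    simp only [Set.mem_setOf_eq, aux_eval_charpoly]
    exact mul_left_cancel₀ (pow_ne_zero v hx) (h1.symm.trans h2)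
  · exact (Set.finite_singleton (0:ℝ)).infinite_compl

lemma aux_Pt_diag_P {v : ℕ} (π : Equiv.Perm (Fin v)) (P : Matrix (Fin v) (Fin v) ℝ)
    (hP : P = Matrix.of fun i j => if π j = i then (1 : ℝ) else 0) (d : Fin v → ℝ) :
    Pᵀ * (Matrix.diagonal d) * P = Matrix.diagonal (fun i => d (π i)) := by
  ext i j
  simp only [hP, Matrix.mul_apply, Matrix.transpose_apply, Matrix.of_apply,
    Matrix.diagonal_apply, ite_mul, mul_ite, one_mul, mul_one, zero_mul, mul_zero,
    Finset.sum_ite_eq, Finset.sum_ite_eq', Finset.mem_univ, if_true]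
  by_cases h : i = j
  · subst h; simp
  · have : ¬ π j = π i := fun hc => h (π.injective hc).symm
    simp [h, this]

lemma aux_diag_inv {v : ℕ} (w : Fin v → ℝ) (hw : ∀ i, w i ≠ 0) :
    (Matrix.diagonal w)⁻¹ = Matrix.diagonal (fun i => (w i)⁻¹) := by
  apply Matrix.inv_eq_right_inv
  rw [Matrix.diagonal_mul_diagonal]
  convert Matrix.diagonal_one using 2
  exact funext fun i => mul_inv_cancel₀ (hw i)

lemma aux_step_perm {v s : ℕ} (Q : Matrix (Fin v) (Fin s) ℝ)
    (π : Equiv.Perm (Fin v)) (P : Matrix (Fin v) (Fin v) ℝ)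
    (hP : P = Matrix.of fun i j => if π j = i then (1 : ℝ) else 0)
    (hPQ : P * (Q * Qᵀ) * Pᵀ = Q * Qᵀ)
    (Φ : (Fin v → ℝ) → ℝ)
    (hinv : ∀ w w' : Fin v → ℝ, IsDesign w → IsDesign w' →
        (Qᵀ * (Matrix.diagonal w)⁻¹ * Q).charpoly
          = (Qᵀ * (Matrix.diagonal w')⁻¹ * Q).charpoly → Φ w = Φ w')
    (w : Fin v → ℝ) (hw : IsDesign w) :
    Φ (fun i => w (π i)) = Φ w := by
  have hwπ : IsDesign (fun i => w (π i)) :=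
    ⟨fun i => hw.1 _, by rw [Equiv.sum_comp π w]; exact hw.2⟩
  set E : Matrix (Fin v) (Fin v) ℝ :=
    Matrix.diagonal (fun i => Real.sqrt (w i)⁻¹) with hE
  have hEE : E * E = Matrix.diagonal (fun i => (w i)⁻¹) := by
    rw [hE, Matrix.diagonal_mul_diagonal]
    exact congrArg Matrix.diagonal
      (funext fun i => Real.mul_self_sqrt (inv_nonneg.mpr (hw.1 i).le))
  set M : Matrix (Fin v) (Fin s) ℝ := E * Q with hM
  set N : Matrix (Fin v) (Fin s) ℝ := E * P * Q with hN
  have hV : Qᵀ * (Matrix.diagonal w)⁻¹ * Q = Mᵀ * M := by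
    rw [aux_diag_inv w (fun i => (hw.1 i).ne'), ← hEE, hM]
    simp only [Matrix.transpose_mul, Matrix.diagonal_transpose, Matrix.mul_assoc, hE]
  have hV' : Qᵀ * (Matrix.diagonal (fun i => w (π i)))⁻¹ * Q = Nᵀ * N := by
    rw [aux_diag_inv _ (fun i => (hw.1 (π i)).ne'),
      show (Matrix.diagonal fun i => (w (π i))⁻¹) = Pᵀ * (Matrix.diagonal fun i => (w i)⁻¹) * P
        from (aux_Pt_diag_P π P hP (fun i => (w i)⁻¹)).symm, ← hEE, hN]
    simp only [Matrix.transpose_mul, Matrix.diagonal_transpose, Matrix.mul_assoc, hE,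
      Matrix.transpose_transpose]
  have hMN : M * Mᵀ = N * Nᵀ := by
    have h1 : N * Nᵀ = E * (P * (Q * Qᵀ) * Pᵀ) * E := by
      rw [hN, hE]
      simp only [Matrix.transpose_mul, Matrix.diagonal_transpose, Matrix.mul_assoc]
    rw [h1, hPQ, hM, hE]
    simp only [Matrix.transpose_mul, Matrix.diagonal_transpose, Matrix.mul_assoc]
  exact hinv _ w hwπ hw (by rw [hV, hV', aux_charpoly_swap N M hMN.symm])

lemma aux_orbit_bij {v : ℕ} (π : Equiv.Perm (Fin v))
    (hcyc : ∀ i j : Fin v, ∃ m : ℕ, (π ^ m) i = j) (i : Fin v) :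
    Function.Bijective (fun m : Fin v => (π ^ (m : ℕ)) i) := by
  have hper : ∀ c : ℕ, π ^ c = 1 → 0 < c → v ≤ c := by
    intro c h1 hc
    have hsur : Function.Surjective (fun m : Fin c => (π ^ (m : ℕ)) i) := by
      intro j
      obtain ⟨m, hm⟩ := hcyc i j
      refine ⟨⟨m % c, Nat.mod_lt _ hc⟩, ?_⟩
      have hpow : π ^ m = π ^ (m % c) := by
        conv_lhs => rw [← Nat.div_add_mod m c]
        rw [pow_add, pow_mul, h1, one_pow, one_mul]
      show (π ^ (m % c)) i = j
      rw [← hpow]; exact hm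
    have := Fintype.card_le_of_surjective _ hsur
    simpa using this
  have hinj : Function.Injective (fun m : Fin v => (π ^ (m : ℕ)) i) := by
    have key : ∀ a b : Fin v, (a : ℕ) ≤ (b : ℕ) →
        (π ^ (a : ℕ)) i = (π ^ (b : ℕ)) i → a = b := by
      intro a b hab h
      have hx : (π ^ ((b : ℕ) - a)) ((π ^ (a : ℕ)) i) = (π ^ (a : ℕ)) i := by
        rw [← Equiv.Perm.mul_apply, ← pow_add, Nat.sub_add_cancel hab]
        exact h.symm
      have hone : π ^ ((b : ℕ) - a) = 1 := by
        refine Equiv.Perm.ext fun j => ?_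
        obtain ⟨m, hm⟩ := hcyc ((π ^ (a : ℕ)) i) j
        rw [Equiv.Perm.one_apply, ← hm, ← Equiv.Perm.mul_apply, ← pow_add,
          Nat.add_comm, pow_add, Equiv.Perm.mul_apply, hx]
      rcases Nat.eq_zero_or_pos ((b : ℕ) - a) with h0 | h0
      · exact Fin.ext (Nat.le_antisymm hab (Nat.le_of_sub_eq_zero h0))
      · exfalso
        have := hper _ hone h0
        have hb : (b : ℕ) - a < v := lt_of_le_of_lt (Nat.sub_le _ _) b.isLt
        omega
    intro a b h
    rcases le_total (a : ℕ) (b : ℕ) with hab | hab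
    · exact key a b hab h
    · exact (key b a hab h.symm).symm
  exact (Finite.injective_iff_bijective).mp hinj

theorem stmt_15 (v s : ℕ) (Q : Matrix (Fin v) (Fin s) ℝ)
    (hQ1 : Qᵀ *ᵥ (fun _ => (1 : ℝ)) = 0)
    (π : Equiv.Perm (Fin v))
    (hcyc : ∀ i j : Fin v, ∃ m : ℕ, (π ^ m) i = j)
    (P : Matrix (Fin v) (Fin v) ℝ)
    (hP : P = Matrix.of fun i j => if π j = i then (1 : ℝ) else 0)
    (hPQ : P * (Q * Qᵀ) * Pᵀ = Q * Qᵀ)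
    (Φ : (Fin v → ℝ) → ℝ)
    (hconc : ∀ w w' : Fin v → ℝ, IsDesign w → IsDesign w' →
        ∀ t : ℝ, 0 ≤ t → t ≤ 1 →
          t * Φ w + (1 - t) * Φ w' ≤ Φ (t • w + (1 - t) • w'))
    (hinv : ∀ w w' : Fin v → ℝ, IsDesign w → IsDesign w' →
        (Qᵀ * (Matrix.diagonal w)⁻¹ * Q).charpoly
          = (Qᵀ * (Matrix.diagonal w')⁻¹ * Q).charpoly → Φ w = Φ w') :
    ∀ w : Fin v → ℝ, IsDesign w → Φ w ≤ Φ (fun _ => (v : ℝ)⁻¹) := by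
  intro w hw
  rcases Nat.eq_zero_or_pos v with hv | hv
  · exfalso
    have h2 := hw.2
    subst hv
    simp at h2
  -- iterates of w under π are designs with the same criterion value
  have hiter : ∀ k : ℕ, IsDesign (fun i => w ((π ^ k) i))
      ∧ Φ (fun i => w ((π ^ k) i)) = Φ w := by
    intro k
    induction k with
    | zero =>
        have h0 : (fun i => w ((π ^ 0) i)) = w := by
          funext i; rw [pow_zero]; rfl
        rw [h0]; exact ⟨hw, rfl⟩
    | succ k ih =>
        have h1 : (fun i => w ((π ^ (k+1)) i))
            = (fun i => (fun j => w ((π ^ k) j)) (π i)) := by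
          funext i; rw [pow_succ]; rfl
        rw [h1]
        refine ⟨⟨fun i => ih.1.1 _, by rw [Equiv.sum_comp π]; exact ih.1.2⟩, ?_⟩
        rw [aux_step_perm Q π P hP hPQ Φ hinv _ ih.1, ih.2]
  -- averaged designs
  set u : ℕ → Fin v → ℝ :=
    fun k i => (∑ m ∈ Finset.range (k+1), w ((π ^ m) i)) / (k+1) with hu_def
  have hu : ∀ k : ℕ, IsDesign (u k) ∧ Φ w ≤ Φ (u k) := by
    intro k
    induction k with
    | zero =>
        have h0 : u 0 = w := by
          funext i
          simp [hu_def, Finset.sum_range_one]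
        rw [h0]; exact ⟨hw, le_refl _⟩
    | succ k ih =>
        set t : ℝ := 1 / ((k : ℝ) + 2) with ht_def
        have htpos : 0 < t := by positivity
        have ht1 : t < 1 := by
          rw [ht_def, div_lt_one (by positivity)]
          linarith
        have hcomb : u (k+1) = t • (fun i => w ((π ^ (k+1)) i)) + (1 - t) • u k := by
          funext i
          simp only [hu_def, Pi.add_apply, Pi.smul_apply, smul_eq_mul,
            Finset.sum_range_succ, ht_def]
          push_cast
          have hk1 : (k : ℝ) + 1 ≠ 0 := by positivity
          have hk2 : (k : ℝ) + 2 ≠ 0 := by positivity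
          field_simp
          ring
        have hdk := hiter (k+1)
        have hdes : IsDesign (u (k+1)) := by
          rw [hcomb]
          constructor
          · intro i
            have := hdk.1.1 i
            have h2 := ih.1.1 i
            simp only [Pi.add_apply, Pi.smul_apply, smul_eq_mul]
            have := mul_pos htpos (hdk.1.1 i)
            nlinarith [ih.1.1 i]
          · simp only [Pi.add_apply, Pi.smul_apply, smul_eq_mul]
            rw [Finset.sum_add_distrib, ← Finset.mul_sum, ← Finset.mul_sum,
              hdk.1.2, ih.1.2]
            ring
        refine ⟨hdes, ?_⟩
        have hc := hconc _ _ hdk.1 ih.1 t htpos.le ht1.le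
        rw [hdk.2] at hc
        rw [hcomb]
        calc Φ w = t * Φ w + (1 - t) * Φ w := by ring
          _ ≤ t * Φ w + (1 - t) * Φ (u k) := by nlinarith [ih.2]
          _ ≤ _ := hc
  -- the (v-1)-st average is the uniform design
  have huni : u (v - 1) = fun _ => (v : ℝ)⁻¹ := by
    funext i
    have hb := aux_orbit_bij π hcyc i
    have hsum : ∑ m ∈ Finset.range v, w ((π ^ m) i) = 1 := by
      rw [← Fin.sum_univ_eq_sum_range (fun m => w ((π ^ m) i)) v]
      rw [Fintype.sum_bijective _ hb _ w (fun m => rfl)]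
      exact hw.2
    have hv1 : v - 1 + 1 = v := Nat.sub_add_cancel hv
    simp only [hu_def, hv1, hsum]
    have : ((v - 1 : ℕ) : ℝ) + 1 = (v : ℝ) := by
      exact_mod_cast congrArg (Nat.cast : ℕ → ℝ) hv1
    rw [this, one_div]
  have := (hu (v - 1)).2
  rwa [huni] at this
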